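/- Define W(s,t) = (-s - t + t·cosh s + s·cosh t + sinh s + sinh t - sinh(s+t)) / (s·t·sinh(s/2)·sinh(t/2)·sinh((s+t)/2)), for s, t ≠ 0 with s + t ≠ 0. Then W(s,t) → -2/3 as (s,t) → (0,0). -/

import Mathlib

open Real Filter Topology

noncomputable def W (s t : ℝ) : ℝ :=
  (-s - t + t * Real.cosh s + s * Real.cosh t + Real.sinh s + Real.sinh t -
      Real.sinh (s + t)) /
    (s * t * Real.sinh (s / 2) * Real.sinh (t / 2) * Real.sinh ((s + t) / 2))

set_option maxHeartbeats 1600000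

section WAux
open intervalIntegral


-- basic derivative helpers
lemma hdsinh (c u : ℝ) : HasDerivAt (fun v => Real.sinh (c*v)) (c * Real.cosh (c*u)) u := by
  simpa [mul_comm, Function.comp_def] using (Real.hasDerivAt_sinh (c*u)).comp u ((hasDerivAt_id u).const_mul c)

lemma hdcosh (c u : ℝ) : HasDerivAt (fun v => Real.cosh (c*v)) (c * Real.sinh (c*u)) u := by
  simpa [mul_comm, Function.comp_def] using (Real.hasDerivAt_cosh (c*u)).comp u ((hasDerivAt_id u).const_mul c)

-- sinh bound
lemma sinh_le_three (y : ℝ) (h0 : 0 ≤ y) (h1 : y ≤ 1) : Real.sinh y ≤ 3 * y := by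
  have key : Real.exp y - Real.exp (-y) ≤ 2 * y * Real.exp y := by
    have h2 : 1 - 2*y ≤ Real.exp (-(2*y)) := by
      have := Real.add_one_le_exp (-(2*y)); linarith
    have h3 : Real.exp (-y) = Real.exp y * Real.exp (-(2*y)) := by
      rw [← Real.exp_add]; ring_nf
    have h4 : 0 < Real.exp y := Real.exp_pos y
    nlinarith
  have h5 : Real.exp y ≤ Real.exp 1 := Real.exp_le_exp.2 h1
  have h6 : Real.exp 1 < 2.7182818286 := Real.exp_one_lt_d9
  rw [Real.sinh_eq]
  nlinarith [Real.exp_pos y]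

lemma abs_sinh_le (z : ℝ) (h : |z| ≤ 1) : |Real.sinh z| ≤ 3 * |z| := by
  rw [Real.abs_sinh]
  exact sinh_le_three |z| (abs_nonneg z) h

lemma cosh_sub_one_le (z : ℝ) (h : |z| ≤ 1) : Real.cosh z - 1 ≤ 5 * z^2 := by
  have h1 : Real.cosh z = 1 + 2 * Real.sinh (z/2)^2 := by
    have := Real.cosh_add (z/2) (z/2)
    have h2 := Real.cosh_sq' (z/2)
    have h3 : z/2 + z/2 = z := by ring
    rw [h3] at this
    nlinarith
  have h4 : |Real.sinh (z/2)| ≤ 3 * |z/2| := by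
    apply abs_sinh_le
    rw [abs_div]
    simp only [abs_two]
    linarith [abs_nonneg z, (by rw [abs_div]; simp : |z/2| = |z|/2)]
  have h5 : Real.sinh (z/2)^2 ≤ (3 * |z/2|)^2 := by
    rw [← sq_abs]; exact pow_le_pow_left₀ (abs_nonneg _) h4 2
  have h6 : |z/2| = |z|/2 := by rw [abs_div]; simp
  rw [h6] at h5
  nlinarith [sq_abs z]

lemma cosh_sub_cosh' (a b : ℝ) :
    Real.cosh a - Real.cosh b = 2 * Real.sinh ((a+b)/2) * Real.sinh ((a-b)/2) := by
  calc Real.cosh a - Real.cosh b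
      = Real.cosh ((a+b)/2 + (a-b)/2) - Real.cosh ((a+b)/2 - (a-b)/2) := by
        rw [show (a+b)/2+(a-b)/2 = a by ring, show (a+b)/2-(a-b)/2 = b by ring]
    _ = 2 * Real.sinh ((a+b)/2) * Real.sinh ((a-b)/2) := by
        rw [Real.cosh_add, Real.cosh_sub]; ring

noncomputable def Wr (x : ℝ) : ℝ := ∫ u in (0:ℝ)..1, Real.cosh (x*u/2)
noncomputable def Wp (x : ℝ) : ℝ := ∫ u in (0:ℝ)..1, (1-u) * Real.cosh (x*u)
noncomputable def Wq (x : ℝ) : ℝ := ∫ u in (0:ℝ)..1, (1-u)^2/2 * Real.cosh (x*u)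

lemma contWr (x : ℝ) : Continuous (fun u : ℝ => Real.cosh (x*u/2)) := by fun_prop
lemma contWp (x : ℝ) : Continuous (fun u : ℝ => (1-u) * Real.cosh (x*u)) := by fun_prop
lemma contWq (x : ℝ) : Continuous (fun u : ℝ => (1-u)^2/2 * Real.cosh (x*u)) := by fun_prop

lemma wr_id {x : ℝ} (hx : x ≠ 0) : Real.sinh (x/2) = x * Wr x / 2 := by
  have key : ∀ u ∈ Set.uIcc (0:ℝ) 1,
      HasDerivAt (fun v => 2/x * Real.sinh (x/2*v)) (Real.cosh (x*u/2)) u := by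
    intro u _
    have h := (hdsinh (x/2) u).const_mul (2/x)
    refine h.congr_deriv ?_
    rw [show x/2*u = x*u/2 by ring]
    field_simp
  have := integral_eq_sub_of_hasDerivAt key ((contWr x).intervalIntegrable 0 1)
  rw [Wr, this]
  simp only [mul_one, mul_zero, Real.sinh_zero]
  field_simp
  ring

lemma wp_id {x : ℝ} (hx : x ≠ 0) : Real.cosh x - 1 = x^2 * Wp x := by
  have key : ∀ u ∈ Set.uIcc (0:ℝ) 1,
      HasDerivAt (fun v => (1-v) * Real.sinh (x*v)/x + Real.cosh (x*v)/x^2)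
        ((1-u) * Real.cosh (x*u)) u := by
    intro u _
    have h1 : HasDerivAt (fun v : ℝ => 1 - v) (-1) u := by
      simpa using (hasDerivAt_id u).const_sub 1
    have h2 := ((h1.mul (hdsinh x u)).div_const x).add ((hdcosh x u).div_const (x^2))
    refine h2.congr_deriv ?_
    field_simp
    ring
  have := integral_eq_sub_of_hasDerivAt key ((contWp x).intervalIntegrable 0 1)
  rw [Wp, this]
  simp only [mul_one, mul_zero, Real.sinh_zero, Real.cosh_zero, sub_self, zero_mul, one_mul]
  field_simp
  ring

lemma wq_id {x : ℝ} (hx : x ≠ 0) : Real.sinh x - x = x^3 * Wq x := by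
  have key : ∀ u ∈ Set.uIcc (0:ℝ) 1,
      HasDerivAt (fun v => (1-v)^2/2 * Real.sinh (x*v)/x + (1-v) * Real.cosh (x*v)/x^2
          + Real.sinh (x*v)/x^3)
        ((1-u)^2/2 * Real.cosh (x*u)) u := by
    intro u _
    have h1 : HasDerivAt (fun v : ℝ => 1 - v) (-1) u := by
      simpa using (hasDerivAt_id u).const_sub 1
    have h0 : HasDerivAt (fun v : ℝ => (1-v)^2/2) (-(1-u)) u := by
      have := (h1.pow 2).div_const 2
      refine this.congr_deriv ?_
      ring
    have h2 := (((h0.mul (hdsinh x u)).div_const x).add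
        ((h1.mul (hdcosh x u)).div_const (x^2))).add ((hdsinh x u).div_const (x^3))
    refine h2.congr_deriv ?_
    field_simp
    ring
  have := integral_eq_sub_of_hasDerivAt key ((contWq x).intervalIntegrable 0 1)
  rw [Wq, this]
  simp only [mul_one, mul_zero, Real.sinh_zero, Real.cosh_zero, sub_self, zero_mul, one_mul]
  field_simp
  ring

lemma c_id : Continuous fun u : ℝ => u := continuous_id
lemma c_1u : Continuous fun u : ℝ => 1 - u := by fun_prop
lemma c_1u2 : Continuous fun u : ℝ => (1-u)^2/2 := by fun_prop

lemma mem_unit {u : ℝ} (hu : u ∈ Set.uIoc (0:ℝ) 1) : 0 < u ∧ u ≤ 1 := by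
  rw [Set.uIoc_of_le (by norm_num : (0:ℝ) ≤ 1)] at hu
  exact ⟨hu.1, hu.2⟩

lemma wr_ge_one (x : ℝ) : 1 ≤ Wr x := by
  have h : ∫ u in (0:ℝ)..1, (1:ℝ) = 1 := by simp
  rw [← h, Wr]
  apply integral_mono_on (by norm_num) ((continuous_const).intervalIntegrable 0 1)
    ((contWr x).intervalIntegrable 0 1)
  intro u _
  exact Real.one_le_cosh _

lemma wr_near (x : ℝ) (hx : |x| ≤ 1) : |Wr x - 1| ≤ 2*x^2 := by
  have h : ∫ u in (0:ℝ)..1, (1:ℝ) = 1 := by simp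
  rw [← h, Wr, ← integral_sub ((contWr x).intervalIntegrable 0 1)
    ((continuous_const).intervalIntegrable 0 1)]
  have := intervalIntegral.norm_integral_le_of_norm_le_const
    (a := 0) (b := 1) (C := 2*x^2) (f := fun u => Real.cosh (x*u/2) - 1) ?_
  · simpa [Real.norm_eq_abs] using this
  · intro u hu
    obtain ⟨h0, h1⟩ := mem_unit hu
    have harg : |x*u/2| ≤ 1 := by
      rw [abs_div, abs_mul, abs_two]
      rw [abs_of_pos h0]
      nlinarith [abs_nonneg x]
    have hle := cosh_sub_one_le _ harg
    have hge : (0:ℝ) ≤ Real.cosh (x*u/2) - 1 := by linarith [Real.one_le_cosh (x*u/2)]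
    rw [Real.norm_eq_abs, abs_of_nonneg hge]
    have hu2 : u^2 ≤ 1 := by nlinarith
    have hx2 : x^2*u^2 ≤ x^2 := by nlinarith [sq_nonneg x]
    have expand : 5 * (x*u/2)^2 = 5/4*(x^2*u^2) := by ring
    linarith

lemma wp_near (x : ℝ) (hx : |x| ≤ 1) : |Wp x - 1/2| ≤ 5*x^2 := by
  have h : ∫ u in (0:ℝ)..1, (1-u) = 1/2 := by
    rw [integral_sub ((continuous_const).intervalIntegrable 0 1)
      (c_id.intervalIntegrable 0 1)]
    simp [integral_id]
    norm_num
  rw [← h, Wp, ← integral_sub ((contWp x).intervalIntegrable 0 1)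
    (c_1u.intervalIntegrable 0 1)]
  have := intervalIntegral.norm_integral_le_of_norm_le_const
    (a := 0) (b := 1) (C := 5*x^2)
    (f := fun u => (1-u) * Real.cosh (x*u) - (1-u)) ?_
  · simpa [Real.norm_eq_abs] using this
  · intro u hu
    obtain ⟨h0, h1⟩ := mem_unit hu
    have harg : |x*u| ≤ 1 := by
      rw [abs_mul, abs_of_pos h0]
      nlinarith [abs_nonneg x]
    have hle := cosh_sub_one_le _ harg
    have hge : (0:ℝ) ≤ Real.cosh (x*u) - 1 := by linarith [Real.one_le_cosh (x*u)]
    have heq : (1-u) * Real.cosh (x*u) - (1-u) = (1-u) * (Real.cosh (x*u) - 1) := by ring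
    simp only [Real.norm_eq_abs]
    rw [heq, abs_mul, abs_of_nonneg (by linarith : (0:ℝ) ≤ 1-u), abs_of_nonneg hge]
    have hu2 : u^2 ≤ 1 := by nlinarith
    have hx2 : x^2*u^2 ≤ x^2 := by nlinarith [sq_nonneg x]
    have expand : 5 * (x*u)^2 = 5*(x^2*u^2) := by ring
    nlinarith [abs_nonneg (Real.cosh (x*u) - 1)]

lemma wq_near (x : ℝ) (hx : |x| ≤ 1) : |Wq x - 1/6| ≤ 3*x^2 := by
  have h : ∫ u in (0:ℝ)..1, (1-u)^2/2 = 1/6 := by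
    have key : ∀ u ∈ Set.uIcc (0:ℝ) 1,
        HasDerivAt (fun v : ℝ => -(1-v)^3/6) ((1-u)^2/2) u := by
      intro u _
      have h1 : HasDerivAt (fun v : ℝ => 1 - v) (-1) u := by
        simpa using (hasDerivAt_id u).const_sub 1
      have := ((h1.pow 3).neg).div_const 6
      refine this.congr_deriv ?_
      ring
    rw [integral_eq_sub_of_hasDerivAt key (c_1u2.intervalIntegrable 0 1)]
    norm_num
  rw [← h, Wq, ← integral_sub ((contWq x).intervalIntegrable 0 1)
    (c_1u2.intervalIntegrable 0 1)]
  have := intervalIntegral.norm_integral_le_of_norm_le_const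
    (a := 0) (b := 1) (C := 3*x^2)
    (f := fun u => (1-u)^2/2 * Real.cosh (x*u) - (1-u)^2/2) ?_
  · simpa [Real.norm_eq_abs] using this
  · intro u hu
    obtain ⟨h0, h1⟩ := mem_unit hu
    have harg : |x*u| ≤ 1 := by
      rw [abs_mul, abs_of_pos h0]
      nlinarith [abs_nonneg x]
    have hle := cosh_sub_one_le _ harg
    have hge : (0:ℝ) ≤ Real.cosh (x*u) - 1 := by linarith [Real.one_le_cosh (x*u)]
    have heq : (1-u)^2/2 * Real.cosh (x*u) - (1-u)^2/2 = (1-u)^2/2 * (Real.cosh (x*u) - 1) := by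
      ring
    simp only [Real.norm_eq_abs]
    rw [heq, abs_mul, abs_of_nonneg (by positivity : (0:ℝ) ≤ (1-u)^2/2), abs_of_nonneg hge]
    have hu2 : u^2 ≤ 1 := by nlinarith
    have hx2 : x^2*u^2 ≤ x^2 := by nlinarith [sq_nonneg x]
    have expand : 5 * (x*u)^2 = 5*(x^2*u^2) := by ring
    have h3 : (1-u)^2/2 ≤ 1/2 := by nlinarith
    nlinarith [sq_nonneg x]

lemma cosh_diff_bound {s t u : ℝ} (hs : |s| ≤ 1/2) (ht : |t| ≤ 1/2) (h0 : 0 < u) (h1 : u ≤ 1) :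
    |Real.cosh (t*u) - Real.cosh (s*u)| ≤ 5 * (|t+s| * |t-s|) := by
  rw [cosh_sub_cosh' (t*u) (s*u)]
  have hst : |t+s| ≤ 1 := by
    calc |t+s| ≤ |t| + |s| := abs_add_le t s
    _ ≤ 1 := by linarith
  have hst' : |t-s| ≤ 1 := by
    calc |t-s| ≤ |t| + |s| := abs_sub _ _
    _ ≤ 1 := by linarith
  have e1 : (t*u+s*u)/2 = (t+s)*u/2 := by ring
  have e2 : (t*u-s*u)/2 = (t-s)*u/2 := by ring
  have ha1 : |(t+s)*u/2| ≤ |t+s|/2 := by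
    rw [abs_div, abs_mul, abs_two, abs_of_pos h0]
    have := abs_nonneg (t+s)
    nlinarith
  have ha2 : |(t-s)*u/2| ≤ |t-s|/2 := by
    rw [abs_div, abs_mul, abs_two, abs_of_pos h0]
    have := abs_nonneg (t-s)
    nlinarith
  have hb1 : |Real.sinh ((t+s)*u/2)| ≤ 3 * (|t+s|/2) := by
    have := abs_sinh_le ((t+s)*u/2) (by linarith)
    calc |Real.sinh ((t+s)*u/2)| ≤ 3 * |(t+s)*u/2| := this
    _ ≤ 3 * (|t+s|/2) := by linarith
  have hb2 : |Real.sinh ((t-s)*u/2)| ≤ 3 * (|t-s|/2) := by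
    have := abs_sinh_le ((t-s)*u/2) (by linarith)
    calc |Real.sinh ((t-s)*u/2)| ≤ 3 * |(t-s)*u/2| := this
    _ ≤ 3 * (|t-s|/2) := by linarith
  rw [e1, e2, abs_mul, abs_mul, abs_two]
  have := abs_nonneg (Real.sinh ((t+s)*u/2))
  have := abs_nonneg (Real.sinh ((t-s)*u/2))
  have := abs_nonneg (t+s)
  have := abs_nonneg (t-s)
  nlinarith

lemma wq_lip {s t : ℝ} (hs : |s| ≤ 1/2) (ht : |t| ≤ 1/2) :
    |Wq t - Wq s| ≤ 3 * (|t+s| * |t-s|) := by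
  rw [Wq, Wq, ← integral_sub ((contWq t).intervalIntegrable 0 1)
    ((contWq s).intervalIntegrable 0 1)]
  have := intervalIntegral.norm_integral_le_of_norm_le_const
    (a := 0) (b := 1) (C := 3 * (|t+s| * |t-s|))
    (f := fun u => (1-u)^2/2 * Real.cosh (t*u) - (1-u)^2/2 * Real.cosh (s*u)) ?_
  · simpa [Real.norm_eq_abs] using this
  · intro u hu
    obtain ⟨h0, h1⟩ := mem_unit hu
    simp only [Real.norm_eq_abs]
    have heq : (1-u)^2/2 * Real.cosh (t*u) - (1-u)^2/2 * Real.cosh (s*u)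
        = (1-u)^2/2 * (Real.cosh (t*u) - Real.cosh (s*u)) := by ring
    rw [heq, abs_mul, abs_of_nonneg (by positivity : (0:ℝ) ≤ (1-u)^2/2)]
    have hw : (1-u)^2/2 ≤ 1/2 := by nlinarith
    have hc := cosh_diff_bound hs ht h0 h1
    have h2 := abs_nonneg (Real.cosh (t*u) - Real.cosh (s*u))
    have h3 : (0:ℝ) ≤ |t+s| * |t-s| := mul_nonneg (abs_nonneg _) (abs_nonneg _)
    nlinarith

lemma wp_lip {s t : ℝ} (hs : |s| ≤ 1/2) (ht : |t| ≤ 1/2) :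
    |Wp t - Wp s| ≤ 5 * (|t+s| * |t-s|) := by
  rw [Wp, Wp, ← integral_sub ((contWp t).intervalIntegrable 0 1)
    ((contWp s).intervalIntegrable 0 1)]
  have := intervalIntegral.norm_integral_le_of_norm_le_const
    (a := 0) (b := 1) (C := 5 * (|t+s| * |t-s|))
    (f := fun u => (1-u) * Real.cosh (t*u) - (1-u) * Real.cosh (s*u)) ?_
  · simpa [Real.norm_eq_abs] using this
  · intro u hu
    obtain ⟨h0, h1⟩ := mem_unit hu
    simp only [Real.norm_eq_abs]
    have heq : (1-u) * Real.cosh (t*u) - (1-u) * Real.cosh (s*u)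
        = (1-u) * (Real.cosh (t*u) - Real.cosh (s*u)) := by ring
    rw [heq, abs_mul, abs_of_nonneg (by linarith : (0:ℝ) ≤ 1-u)]
    have hw : (1-u) ≤ 1 := by linarith
    have hc := cosh_diff_bound hs ht h0 h1
    have h2 := abs_nonneg (Real.cosh (t*u) - Real.cosh (s*u))
    have h3 : (0:ℝ) ≤ |t+s| * |t-s| := mul_nonneg (abs_nonneg _) (abs_nonneg _)
    nlinarith

lemma num_id (s t : ℝ) :
    -s - t + t * Real.cosh s + s * Real.cosh t + Real.sinh s + Real.sinh t - Real.sinh (s + t)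
    = (Real.cosh s - 1) * (t - Real.sinh t) + (Real.cosh t - 1) * (s - Real.sinh s) := by
  rw [Real.sinh_add]
  ring

lemma W_eq {s t : ℝ} (hs : s ≠ 0) (ht : t ≠ 0) (hst : s + t ≠ 0) :
    W s t = -8 * (Wp s * Wq t * t + Wp t * Wq s * s)
      / ((s+t) * (Wr s * Wr t * Wr (s+t))) := by
  have hrs : Wr s ≠ 0 := by linarith [wr_ge_one s]
  have hrt : Wr t ≠ 0 := by linarith [wr_ge_one t]
  have hru : Wr (s+t) ≠ 0 := by linarith [wr_ge_one (s+t)]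
  have hps := wp_id hs
  have hpt := wp_id ht
  have hqs := wq_id hs
  have hqt := wq_id ht
  have e1 : Real.cosh s = 1 + s^2 * Wp s := by linarith
  have e2 : Real.cosh t = 1 + t^2 * Wp t := by linarith
  have e3 : Real.sinh s = s + s^3 * Wq s := by linarith
  have e4 : Real.sinh t = t + t^3 * Wq t := by linarith
  rw [W, num_id, e1, e2, e3, e4, wr_id hs, wr_id ht, wr_id hst]
  field_simp
  ring


lemma key_alg {s t a b c d r1 r2 r3 : ℝ} (hst : s + t ≠ 0)
    (h1 : |s| ≤ 1/2) (h2 : |t| ≤ 1/2)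
    (Ha : |a - 1/2| ≤ 5*s^2) (Hb : |b - 1/2| ≤ 5*t^2)
    (Hc : |c - 1/6| ≤ 3*s^2) (Hd : |d - 1/6| ≤ 3*t^2)
    (Hab : |a - b| ≤ 5 * (|s+t| * |s-t|)) (Hdc : |d - c| ≤ 3 * (|s+t| * |t-s|))
    (hr1g : 1 ≤ r1) (hr2g : 1 ≤ r2) (hr3g : 1 ≤ r3)
    (hr1n : |r1 - 1| ≤ 2*s^2) (hr2n : |r2 - 1| ≤ 2*t^2) (hr3n : |r3 - 1| ≤ 2*(s+t)^2) :
    |(-8 * (a*d*t + b*c*s)) / ((s+t) * (r1*r2*r3)) + 2/3| ≤ 1000 * (s^2 + t^2) := by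
  have hs2 : s^2 ≤ 1/4 := by nlinarith [sq_abs s, abs_nonneg s]
  have ht2 : t^2 ≤ 1/4 := by nlinarith [sq_abs t, abs_nonneg t]
  have hu2 : (s+t)^2 ≤ 2*(s^2+t^2) := by nlinarith [sq_nonneg (s-t)]
  have Ba := abs_le.1 Ha
  have Bb := abs_le.1 Hb
  have Bc := abs_le.1 Hc
  have Bd := abs_le.1 Hd
  have hr1n' := abs_le.1 hr1n
  have hr2n' := abs_le.1 hr2n
  have hr3n' := abs_le.1 hr3n
  have hA : |a| ≤ 2 := by
    rw [abs_le]
    constructor <;> linarith [Ba.1, Ba.2, hs2]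
  have hC : |c| ≤ 1 := by
    rw [abs_le]
    constructor <;> linarith [Bc.1, Bc.2, hs2]
  have hD : |d| ≤ 1 := by
    rw [abs_le]
    constructor <;> linarith [Bd.1, Bd.2, ht2]
  have had : |a*d - 1/12| ≤ 5*(s^2+t^2) := by
    have e : a*d - 1/12 = (a-1/2)*d + (1/2)*(d-1/6) := by ring
    rw [e]
    calc |(a-1/2)*d + (1/2)*(d-1/6)| ≤ |(a-1/2)*d| + |(1/2)*(d-1/6)| := abs_add_le _ _
    _ = |a-1/2| * |d| + (1/2) * |d-1/6| := by rw [abs_mul, abs_mul]; norm_num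
    _ ≤ 5*s^2*1 + (1/2)*(3*t^2) := by gcongr <;> first | exact abs_nonneg _ | skip
    _ ≤ 5*(s^2+t^2) := by linarith [sq_nonneg s, sq_nonneg t]
  have hbc : |b*c - 1/12| ≤ 5*(s^2+t^2) := by
    have e : b*c - 1/12 = (b-1/2)*c + (1/2)*(c-1/6) := by ring
    rw [e]
    calc |(b-1/2)*c + (1/2)*(c-1/6)| ≤ |(b-1/2)*c| + |(1/2)*(c-1/6)| := abs_add_le _ _
    _ = |b-1/2| * |c| + (1/2) * |c-1/6| := by rw [abs_mul, abs_mul]; norm_num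
    _ ≤ 5*t^2*1 + (1/2)*(3*s^2) := by gcongr <;> first | exact abs_nonneg _ | skip
    _ ≤ 5*(s^2+t^2) := by linarith [sq_nonneg s, sq_nonneg t]
  have hadbc : |a*d - b*c| ≤ 11 * (|s+t| * |t-s|) := by
    have e : a*d - b*c = a*(d-c) + c*(a-b) := by ring
    rw [e]
    have habs : |s-t| = |t-s| := abs_sub_comm s t
    rw [habs] at Hab
    calc |a*(d-c) + c*(a-b)| ≤ |a*(d-c)| + |c*(a-b)| := abs_add_le _ _
    _ = |a| * |d-c| + |c| * |a-b| := by rw [abs_mul, abs_mul]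
    _ ≤ 2*(3 * (|s+t| * |t-s|)) + 1*(5 * (|s+t| * |t-s|)) := by
        gcongr <;> first | exact abs_nonneg _ | skip
    _ = 11 * (|s+t| * |t-s|) := by ring
  have hmu : |(a*d*t + b*c*s) - (s+t)/12| ≤ 16*(s^2+t^2) * |s+t| := by
    have e : (a*d*t + b*c*s) - (s+t)/12
        = ((a*d+b*c)/2 - 1/12)*(s+t) + ((a*d-b*c)/2)*(t-s) := by ring
    have hsum : |(a*d+b*c)/2 - 1/12| ≤ 5*(s^2+t^2) := by
      have e2 : (a*d+b*c)/2 - 1/12 = ((a*d - 1/12) + (b*c - 1/12))/2 := by ring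
      rw [e2, abs_div, abs_two]
      have := abs_add_le (a*d - 1/12) (b*c - 1/12)
      linarith
    rw [e]
    have hts2 : |t-s| * |t-s| ≤ 2*(s^2+t^2) := by
      nlinarith [sq_abs (t-s), sq_nonneg (t+s)]
    calc |((a*d+b*c)/2 - 1/12)*(s+t) + ((a*d-b*c)/2)*(t-s)|
        ≤ |((a*d+b*c)/2 - 1/12)*(s+t)| + |((a*d-b*c)/2)*(t-s)| := abs_add_le _ _
    _ = |(a*d+b*c)/2 - 1/12| * |s+t| + (|a*d-b*c|/2) * |t-s| := by
        rw [abs_mul, abs_mul, abs_div, abs_two]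
    _ ≤ (5*(s^2+t^2)) * |s+t| + ((11 * (|s+t| * |t-s|))/2) * |t-s| := by
        gcongr <;> first | exact abs_nonneg _ | skip
    _ = 5*(s^2+t^2) * |s+t| + (11/2) * |s+t| * (|t-s| * |t-s|) := by ring
    _ ≤ 5*(s^2+t^2) * |s+t| + (11/2) * |s+t| * (2*(s^2+t^2)) := by
        gcongr <;> first | exact abs_nonneg _ | skip
    _ = 16*(s^2+t^2) * |s+t| := by ring
  have hr1u : r1 ≤ 3/2 := by linarith [hr1n'.2, hs2]
  have hr2u : r2 ≤ 3/2 := by linarith [hr2n'.2, ht2]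
  have hr3u : r3 ≤ 3 := by linarith [hr3n'.2, hu2, hs2, ht2]
  have h12 : 1 ≤ r1*r2 := by nlinarith
  have hPge : 1 ≤ r1*r2*r3 := by nlinarith [h12, hr3g]
  have hPnear : |r1*r2*r3 - 1| ≤ 13*(s^2+t^2) := by
    have hb1 : r2*r3 ≤ 9/2 := by nlinarith
    have hb1' : (0:ℝ) ≤ r2*r3 := by nlinarith
    have e : r1*r2*r3 - 1 = (r1-1)*(r2*r3) + (r2-1)*r3 + (r3-1) := by ring
    have t1 : (r1-1)*(r2*r3) ≤ (2*s^2)*(9/2) :=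
      mul_le_mul (by linarith [hr1n'.2]) hb1 hb1' (by positivity)
    have t2 : (r2-1)*r3 ≤ (2*t^2)*3 :=
      mul_le_mul (by linarith [hr2n'.2]) hr3u (by linarith) (by positivity)
    have t3 : r3-1 ≤ 2*(s+t)^2 := hr3n'.2
    rw [abs_of_nonneg (by linarith : (0:ℝ) ≤ r1*r2*r3 - 1), e]
    nlinarith [sq_nonneg s, sq_nonneg t]
  have hPpos : (0:ℝ) < r1*r2*r3 := by linarith
  have hupos : 0 < |s+t| := abs_pos.2 hst
  have e : -8 * (a*d*t + b*c*s) / ((s+t) * (r1*r2*r3)) + 2/3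
      = (-8*((a*d*t + b*c*s) - (s+t)/12) + (2/3)*(s+t)*(r1*r2*r3-1))
        / ((s+t)*(r1*r2*r3)) := by
    field_simp
    ring
  rw [e, abs_div]
  have hden : |s+t| ≤ |(s+t)*(r1*r2*r3)| := by
    rw [abs_mul, abs_of_pos hPpos]
    nlinarith
  have hnum : |-8*((a*d*t + b*c*s) - (s+t)/12) + (2/3)*(s+t)*(r1*r2*r3-1)|
      ≤ 1000*(s^2+t^2) * |s+t| := by
    calc |-8*((a*d*t + b*c*s) - (s+t)/12) + (2/3)*(s+t)*(r1*r2*r3-1)|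
        ≤ |(-8)*((a*d*t + b*c*s) - (s+t)/12)| + |(2/3)*(s+t)*(r1*r2*r3-1)| := abs_add_le _ _
    _ = 8 * |(a*d*t + b*c*s) - (s+t)/12| + (2/3) * |s+t| * |r1*r2*r3-1| := by
        rw [abs_mul, abs_mul, abs_mul]
        norm_num
    _ ≤ 8*(16*(s^2+t^2) * |s+t|) + (2/3) * |s+t| * (13*(s^2+t^2)) := by
        gcongr <;> first | exact abs_nonneg _ | positivity | skip
    _ ≤ 1000*(s^2+t^2) * |s+t| := by nlinarith [sq_nonneg s, sq_nonneg t, abs_nonneg (s+t)]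
  calc |-8*((a*d*t + b*c*s) - (s+t)/12) + (2/3)*(s+t)*(r1*r2*r3-1)| / |(s+t)*(r1*r2*r3)|
      ≤ (1000*(s^2+t^2) * |s+t|) / |s+t| :=
        div_le_div₀ (by positivity) hnum hupos hden
  _ = 1000*(s^2+t^2) := by field_simp

lemma key {s t : ℝ} (hs : s ≠ 0) (ht : t ≠ 0) (hst : s + t ≠ 0)
    (h1 : |s| ≤ 1/2) (h2 : |t| ≤ 1/2) :
    |W s t + 2/3| ≤ 1000 * (s^2 + t^2) := by
  have hs1 : |s| ≤ 1 := by linarith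
  have ht1 : |t| ≤ 1 := by linarith
  have hu1 : |s+t| ≤ 1 := by
    calc |s+t| ≤ |s| + |t| := abs_add_le s t
    _ ≤ 1 := by linarith
  rw [W_eq hs ht hst]
  exact key_alg hst h1 h2 (wp_near s hs1) (wp_near t ht1) (wq_near s hs1) (wq_near t ht1)
    (by simpa [add_comm] using wp_lip (s := t) (t := s) h2 h1)
    (by simpa [add_comm] using wq_lip (s := s) (t := t) h1 h2)
    (wr_ge_one s) (wr_ge_one t) (wr_ge_one (s+t))
    (wr_near s hs1) (wr_near t ht1) (wr_near (s+t) hu1)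

end WAux

theorem W_limit :
    Tendsto (fun p : ℝ × ℝ => W p.1 p.2)
      (𝓝[{p : ℝ × ℝ | p.1 ≠ 0 ∧ p.2 ≠ 0 ∧ p.1 + p.2 ≠ 0}] (0, 0))
      (𝓝 (-2 / 3)) := by
  rw [Metric.tendsto_nhdsWithin_nhds]
  intro ε hε
  refine ⟨min (1/2) (ε/4001), by positivity, ?_⟩
  rintro ⟨s, t⟩ ⟨hs, ht, hst⟩ hd
  rw [Prod.dist_eq] at hd
  simp only [Real.dist_eq, sub_zero] at hd
  have hδ1 : |s| < min (1/2) (ε/4001) := lt_of_le_of_lt (le_max_left _ _) hd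
  have hδ2 : |t| < min (1/2) (ε/4001) := lt_of_le_of_lt (le_max_right _ _) hd
  have hm1 : min (1/2) (ε/4001) ≤ 1/2 := min_le_left _ _
  have hm2 : min (1/2) (ε/4001) ≤ ε/4001 := min_le_right _ _
  have h1 : |s| ≤ 1/2 := by linarith
  have h2 : |t| ≤ 1/2 := by linarith
  have hk := key hs ht hst h1 h2
  have hdist : dist (W s t) (-2/3) = |W s t + 2/3| := by
    rw [Real.dist_eq]
    norm_num
  calc dist (W s t) (-2/3) = |W s t + 2/3| := hdist
  _ ≤ 1000 * (s^2 + t^2) := hk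
  _ < ε := by
      have e1 : s^2 < (min (1/2) (ε/4001))^2 := by
        nlinarith [sq_abs s, abs_nonneg s, lt_min (by norm_num : (0:ℝ) < 1/2)
          (by positivity : (0:ℝ) < ε/4001)]
      have e2 : t^2 < (min (1/2) (ε/4001))^2 := by
        nlinarith [sq_abs t, abs_nonneg t, lt_min (by norm_num : (0:ℝ) < 1/2)
          (by positivity : (0:ℝ) < ε/4001)]
      have hp : (0:ℝ) < min (1/2) (ε/4001) :=
        lt_min (by norm_num) (by positivity)
      nlinarith [hp, hm1, hm2]
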